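/- Let Γ(μ) = (V, E) be the meandric graph of a meandric permutation μ of {1,…,2n}, and for a vertex v let N(v) denote the set of its neighbors. Then: |N(v)| is even for every vertex v; |N(v) ∩ N(u)| is even whenever u ∉ N(v) and u ≠ v; and |N(v) ∩ N(w)| is odd whenever w ∈ N(v). -/

import Mathlib

/-- Two arcs `{a,b}` and `{c,d}` cross iff, after ordering each pair,
`a < c < b < d` or `c < a < d < b`. -/
def ArcsCross (a b c d : ℕ) : Prop :=
  (min a b < min c d ∧ min c d < max a b ∧ max a b < max c d) ∨
  (min c d < min a b ∧ min a b < max c d ∧ max c d < max a b)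

/-- A permutation `μ` of `{1,…,2n}` (with `μ 1 = 1`) is meandric if the lower
arcs `{μ(2k-1), μ(2k)}`, `k = 1,…,n`, are pairwise noncrossing and the upper
arcs `{μ(2k), μ(2k+1)}`, `k = 1,…,n` (cyclically, so the last one is
`{μ(2n), μ(1)}`), are pairwise noncrossing. -/
def IsMeandric (n : ℕ) (μ : ℕ → ℕ) : Prop :=
  (∀ k l : ℕ, 1 ≤ k → k ≤ n → 1 ≤ l → l ≤ n → k ≠ l →
    ¬ ArcsCross (μ (2 * k - 1)) (μ (2 * k)) (μ (2 * l - 1)) (μ (2 * l))) ∧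
  (∀ k l : ℕ, 1 ≤ k → k ≤ n → 1 ≤ l → l ≤ n → k ≠ l →
    ¬ ArcsCross (μ (2 * k)) (μ (2 * k % (2 * n) + 1))
        (μ (2 * l)) (μ (2 * l % (2 * n) + 1)))

/-- The meandric graph `Γ(μ)` on the vertex set `{0,1,…,2n}`: vertex `0` is
adjacent to all other vertices, and vertices `1 ≤ i < j ≤ 2n` are adjacent iff
`μ i < μ j`. -/
def meandricGraph (n : ℕ) (μ : ℕ → ℕ) : SimpleGraph (Fin (2 * n + 1)) where
  Adj u v := u ≠ v ∧ (u.val = 0 ∨ v.val = 0 ∨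
    μ (min u.val v.val) < μ (max u.val v.val))
  symm := by
    constructor
    intro u v h
    refine ⟨h.1.symm, ?_⟩
    rcases h.2 with h2 | h2 | h2
    · exact Or.inr (Or.inl h2)
    · exact Or.inl h2
    · exact Or.inr (Or.inr (by rwa [min_comm, max_comm]))
  loopless := ⟨fun u h => h.1 rfl⟩

namespace MeandricAux

open Finset

/-- rectangle count -/
def Fc (μ : ℕ → ℕ) (x y : ℕ) : ℕ := ((Icc 1 x).filter fun t => μ t ≤ y).card

/-- adjacency on the line part -/
def Ag (μ : ℕ → ℕ) (i k : ℕ) : Prop := k ≠ i ∧ μ (min i k) < μ (max i k)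

instance (μ : ℕ → ℕ) (i : ℕ) : DecidablePred (Ag μ i) := fun k => by
  unfold Ag; infer_instance

/-- strictly inside the span of the arc `{μ a, μ (a+1)}` -/
def mIn (μ : ℕ → ℕ) (a x : ℕ) : Prop :=
  min (μ a) (μ (a+1)) < x ∧ x < max (μ a) (μ (a+1))

instance (μ : ℕ → ℕ) (a : ℕ) : DecidablePred (mIn μ a) := fun x => by
  unfold mIn; infer_instance

lemma sum_mod_two (s : Finset ℕ) (f : ℕ → ℕ) (h : ∀ k ∈ s, f k % 2 = 0) :
    (∑ k ∈ s, f k) % 2 = 0 := by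
  rw [Finset.sum_nat_mod, Finset.sum_congr rfl h]
  simp

lemma cross_helper {A B x y : ℕ} (h : ¬ ArcsCross A B x y) (hxA : x ≠ A) (hxB : x ≠ B)
    (hyA : y ≠ A) (hyB : y ≠ B) :
    ((min A B < x ∧ x < max A B) ↔ (min A B < y ∧ y < max A B)) := by
  unfold ArcsCross at h; omega

section Main

variable {n : ℕ} {μ : ℕ → ℕ}

lemma hmem (hbij : Set.BijOn μ (Set.Icc 1 (2*n)) (Set.Icc 1 (2*n)))
    {t : ℕ} (ht1 : 1 ≤ t) (ht2 : t ≤ 2*n) : 1 ≤ μ t ∧ μ t ≤ 2*n :=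
  Set.mem_Icc.mp (hbij.mapsTo (Set.mem_Icc.mpr ⟨ht1, ht2⟩))

lemma hinj (hbij : Set.BijOn μ (Set.Icc 1 (2*n)) (Set.Icc 1 (2*n)))
    {t s : ℕ} (ht1 : 1 ≤ t) (ht2 : t ≤ 2*n) (hs1 : 1 ≤ s) (hs2 : s ≤ 2*n)
    (h : μ t = μ s) : t = s :=
  hbij.injOn (Set.mem_Icc.mpr ⟨ht1, ht2⟩) (Set.mem_Icc.mpr ⟨hs1, hs2⟩) h

lemma hsurj (hbij : Set.BijOn μ (Set.Icc 1 (2*n)) (Set.Icc 1 (2*n)))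
    {v : ℕ} (hv1 : 1 ≤ v) (hv2 : v ≤ 2*n) :
    ∃ t, 1 ≤ t ∧ t ≤ 2*n ∧ μ t = v := by
  obtain ⟨t, ht, h⟩ := hbij.surjOn (Set.mem_Icc.mpr ⟨hv1, hv2⟩)
  exact ⟨t, (Set.mem_Icc.mp ht).1, (Set.mem_Icc.mp ht).2, h⟩

/-- the pair-swap lemma: noncrossing matchings preserve membership in spans -/
lemma ps (hbij : Set.BijOn μ (Set.Icc 1 (2*n)) (Set.Icc 1 (2*n))) (hμ : IsMeandric n μ)
    (a b : ℕ) (ha1 : 1 ≤ a) (ha2 : a + 1 ≤ 2*n) (hb1 : 1 ≤ b) (hb2 : b + 1 ≤ 2*n)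
    (hpar : b % 2 = a % 2) :
    (mIn μ a (μ b) ↔ mIn μ a (μ (b+1))) := by
  by_cases hab : b = a
  · subst hab
    unfold mIn
    omega
  · have d1 : μ b ≠ μ a := fun h => hab (hinj hbij hb1 (by omega) ha1 (by omega) h)
    have d2 : μ b ≠ μ (a+1) := fun h => by
      have := hinj hbij hb1 (by omega) (by omega : 1 ≤ a+1) ha2 h; omega
    have d3 : μ (b+1) ≠ μ a := fun h => by
      have := hinj hbij (by omega : 1 ≤ b+1) hb2 ha1 (by omega) h; omega
    have d4 : μ (b+1) ≠ μ (a+1) := fun h => by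
      have := hinj hbij (by omega : 1 ≤ b+1) hb2 (by omega : 1 ≤ a+1) ha2 h; omega
    by_cases hodd : a % 2 = 1
    · have e1 : 2 * ((a+1)/2) - 1 = a := by omega
      have e2 : 2 * ((a+1)/2) = a + 1 := by omega
      have e3 : 2 * ((b+1)/2) - 1 = b := by omega
      have e4 : 2 * ((b+1)/2) = b + 1 := by omega
      have hc := hμ.1 ((a+1)/2) ((b+1)/2) (by omega) (by omega) (by omega) (by omega)
        (by omega)
      rw [e1, e2, e3, e4] at hc
      unfold mIn
      exact cross_helper hc d1 d2 d3 d4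
    · have e1 : 2 * (a/2) = a := by omega
      have e2 : 2 * (b/2) = b := by omega
      have hc := hμ.2 (a/2) (b/2) (by omega) (by omega) (by omega) (by omega) (by omega)
      rw [Nat.mod_eq_of_lt (by omega : 2 * (a/2) < 2*n),
          Nat.mod_eq_of_lt (by omega : 2 * (b/2) < 2*n), e1, e2] at hc
      unfold mIn
      exact cross_helper hc d1 d2 d3 d4

lemma mu2n_not (hbij : Set.BijOn μ (Set.Icc 1 (2*n)) (Set.Icc 1 (2*n))) (h1 : μ 1 = 1)
    (hμ : IsMeandric n μ) (a : ℕ) (ha1 : 1 ≤ a) (he : a % 2 = 0) (ha2 : a + 1 ≤ 2*n) :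
    ¬ mIn μ a (μ (2*n)) := by
  have e1 : 2 * (a/2) = a := by omega
  have hc := hμ.2 (a/2) n (by omega) (by omega) (by omega) le_rfl (by omega)
  rw [Nat.mod_eq_of_lt (by omega : 2 * (a/2) < 2*n), e1, Nat.mod_self] at hc
  rw [(by norm_num : (0:ℕ) + 1 = 1), h1] at hc
  have d1 : μ (2*n) ≠ μ a := fun h => by
    have := hinj hbij (by omega : 1 ≤ 2*n) le_rfl ha1 (by omega) h; omega
  have d2 : μ (2*n) ≠ μ (a+1) := fun h => by
    have := hinj hbij (by omega : 1 ≤ 2*n) le_rfl (by omega : 1 ≤ a+1) ha2 h; omega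
  have d3 : (1:ℕ) ≠ μ a := fun h => by
    have := hinj hbij (le_refl 1) (by omega) ha1 (by omega) (h1.trans h); omega
  have d4 : (1:ℕ) ≠ μ (a+1) := fun h => by
    have := hinj hbij (le_refl 1) (by omega) (by omega : 1 ≤ a+1) ha2 (h1.trans h); omega
  intro hin
  have hmm := (cross_helper hc d1 d2 d3 d4).mp hin
  have hma := (hmem hbij ha1 (by omega)).1
  have hma2 := (hmem hbij (by omega : 1 ≤ a+1) ha2).1
  unfold mIn at hmm
  omega


/-- The key parity lemma. -/
lemma Kuni (hbij : Set.BijOn μ (Set.Icc 1 (2*n)) (Set.Icc 1 (2*n))) (h1 : μ 1 = 1)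
    (hμ : IsMeandric n μ) (a : ℕ) (ha1 : 1 ≤ a) (ha2 : a + 1 ≤ 2*n) :
    ∀ b, 1 ≤ b → b ≤ 2*n →
      ((Icc 1 b).filter fun t => mIn μ a (μ t)).card % 2
        = if b % 2 = a % 2 ∧ mIn μ a (μ b) then 1 else 0 := by
  intro b hb1
  induction b, hb1 using Nat.le_induction with
  | base =>
    intro _
    have hno : ¬ mIn μ a (μ 1) := by
      rw [h1]; unfold mIn
      have h2 := (hmem hbij ha1 (by omega)).1
      have h3 := (hmem hbij (by omega : 1 ≤ a+1) ha2).1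
      omega
    rw [Icc_self, filter_singleton, if_neg hno, if_neg (fun h => hno h.2)]
    simp
  | succ b hb ih =>
    intro hb2
    have ihb := ih (by omega)
    rw [← Finset.insert_Icc_right_eq_Icc_add_one (by omega : 1 ≤ b + 1), filter_insert]
    by_cases hf : mIn μ a (μ (b+1))
    · rw [if_pos hf, card_insert_of_notMem (by simp)]
      by_cases hpar : b % 2 = a % 2
      · have hiff := ps hbij hμ a b ha1 ha2 hb hb2 hpar
        rw [if_pos ⟨hpar, hiff.mpr hf⟩] at ihb
        rw [if_neg (fun h => by omega)]
        omega
      · rw [if_neg (fun h => hpar h.1)] at ihb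
        rw [if_pos ⟨by omega, hf⟩]
        omega
    · rw [if_neg hf, if_neg (fun h => hf h.2), ihb]
      by_cases hpar : b % 2 = a % 2
      · have hiff := ps hbij hμ a b ha1 ha2 hb hb2 hpar
        rw [if_neg (fun h => hf (hiff.mp h.2))]
      · rw [if_neg (fun h => hpar h.1)]

lemma card_mu_filter (hbij : Set.BijOn μ (Set.Icc 1 (2*n)) (Set.Icc 1 (2*n)))
    (P : ℕ → Prop) [DecidablePred P] :
    ((Icc 1 (2*n)).filter fun t => P (μ t)).card = ((Icc 1 (2*n)).filter P).card := by
  apply Finset.card_bij (fun t _ => μ t)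
  · intro t ht
    simp only [mem_filter, mem_Icc] at *
    exact ⟨⟨(hmem hbij ht.1.1 ht.1.2).1, (hmem hbij ht.1.1 ht.1.2).2⟩, ht.2⟩
  · intro t ht t' ht' h
    simp only [mem_filter, mem_Icc] at ht ht'
    exact hinj hbij ht.1.1 ht.1.2 ht'.1.1 ht'.1.2 h
  · intro v hv
    simp only [mem_filter, mem_Icc] at hv
    obtain ⟨t, ht1, ht2, ht3⟩ := hsurj hbij hv.1.1 hv.1.2
    exact ⟨t, by simp only [mem_filter, mem_Icc]; exact ⟨⟨ht1, ht2⟩, ht3 ▸ hv.2⟩, ht3⟩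

lemma spanOdd (hn : 0 < n) (hbij : Set.BijOn μ (Set.Icc 1 (2*n)) (Set.Icc 1 (2*n)))
    (h1 : μ 1 = 1) (hμ : IsMeandric n μ)
    (a : ℕ) (ha1 : 1 ≤ a) (ha2 : a + 1 ≤ 2*n) : (μ a + μ (a+1)) % 2 = 1 := by
  have hk := Kuni hbij h1 hμ a ha1 ha2 (2*n) (by omega) le_rfl
  have hb1 := hmem hbij ha1 (by omega)
  have hb2 := hmem hbij (by omega : 1 ≤ a+1) ha2
  have hbcard := card_mu_filter hbij (mIn μ a)
  have hIoo : (Icc 1 (2*n)).filter (mIn μ a)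
      = Ioo (min (μ a) (μ (a+1))) (max (μ a) (μ (a+1))) := by
    ext v
    simp only [mem_filter, mem_Icc, mem_Ioo, mIn]
    omega
  rw [hIoo, Nat.card_Ioo] at hbcard
  rw [hbcard] at hk
  have hne : μ a ≠ μ (a+1) := fun h => by
    have := hinj hbij ha1 (by omega) (by omega : 1 ≤ a+1) ha2 h; omega
  by_cases hpar : a % 2 = 0
  · have hnot := mu2n_not hbij h1 hμ a ha1 hpar ha2
    rw [if_neg (fun h => hnot h.2)] at hk
    omega
  · rw [if_neg (fun h => by omega)] at hk
    omega

lemma muParity (hn : 0 < n) (hbij : Set.BijOn μ (Set.Icc 1 (2*n)) (Set.Icc 1 (2*n)))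
    (h1 : μ 1 = 1) (hμ : IsMeandric n μ) :
    ∀ t, 1 ≤ t → t ≤ 2*n → μ t % 2 = t % 2 := by
  intro t ht1
  induction t, ht1 using Nat.le_induction with
  | base => intro _; rw [h1]
  | succ t ht ih =>
    intro h2
    have hs := spanOdd hn hbij h1 hμ t ht h2
    have := ih (by omega)
    omega


/-- counting one value -/
lemma count_eq (hbij : Set.BijOn μ (Set.Icc 1 (2*n)) (Set.Icc 1 (2*n)))
    (b c : ℕ) (hb : b ≤ 2*n) (hc1 : 1 ≤ c) (hc2 : c ≤ 2*n) :
    ((Icc 1 b).filter fun t => μ t = μ c).card = if c ≤ b then 1 else 0 := by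
  split_ifs with h
  · have he : (Icc 1 b).filter (fun t => μ t = μ c) = {c} := by
      ext t
      simp only [mem_filter, mem_Icc, mem_singleton]
      constructor
      · rintro ⟨⟨h1t, h2t⟩, he⟩
        exact hinj hbij h1t (by omega) hc1 hc2 he
      · rintro rfl
        exact ⟨⟨hc1, h⟩, rfl⟩
    rw [he, card_singleton]
  · rw [Finset.card_eq_zero, Finset.filter_eq_empty_iff]
    intro t ht
    simp only [mem_Icc] at ht
    intro he
    have := hinj hbij ht.1 (by omega) hc1 hc2 he
    omega

lemma Fc_split (b x y : ℕ) (hxy : x < y) :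
    Fc μ b y = Fc μ b x + ((Icc 1 b).filter fun t => x < μ t ∧ μ t < y).card
      + ((Icc 1 b).filter fun t => μ t = y).card := by
  unfold Fc
  rw [card_filter, card_filter, card_filter, card_filter, ← sum_add_distrib, ← sum_add_distrib]
  exact Finset.sum_congr rfl fun t _ => by split_ifs <;> omega

/-- The master identity: `F(a,μb) + F(b,μa) + [inv]·(1+a+b)` is even. -/
lemma keyT (hbij : Set.BijOn μ (Set.Icc 1 (2*n)) (Set.Icc 1 (2*n))) (h1 : μ 1 = 1)
    (hμ : IsMeandric n μ) (b : ℕ) (hb1 : 1 ≤ b) :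
    ∀ a, b ≤ a → a ≤ 2*n →
      (Fc μ a (μ b) + Fc μ b (μ a) + (if μ a < μ b then 1 + a + b else 0)) % 2 = 0 := by
  intro a hba
  induction a, hba using Nat.le_induction with
  | base => intro _; rw [if_neg (lt_irrefl _)]; omega
  | succ a hba ih =>
    intro ha2
    have iha := ih (by omega)
    have hmb := hmem hbij hb1 (by omega : b ≤ 2*n)
    have hma := hmem hbij (by omega : 1 ≤ a) (by omega : a ≤ 2*n)
    have hma1 := hmem hbij (by omega : 1 ≤ a+1) ha2
    have hne : μ a ≠ μ (a+1) := fun h => by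
      have := hinj hbij (by omega : 1 ≤ a) (by omega) (by omega : 1 ≤ a+1) ha2 h; omega
    have hba1 : μ b ≠ μ (a+1) := fun h => by
      have := hinj hbij hb1 (by omega) (by omega : 1 ≤ a+1) ha2 h; omega
    have hbamu : b = a ∨ μ b ≠ μ a := by
      rcases eq_or_ne b a with h | h
      · exact Or.inl h
      · exact Or.inr (fun hh => h (hinj hbij hb1 (by omega) (by omega : 1 ≤ a) (by omega) hh))
    have hcongr : b = a → μ b = μ a := fun h => by rw [h]
    have hstep1 : Fc μ (a+1) (μ b) = Fc μ a (μ b) + (if μ (a+1) ≤ μ b then 1 else 0) := by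
      unfold Fc
      rw [← Finset.insert_Icc_right_eq_Icc_add_one (by omega : 1 ≤ a + 1), filter_insert]
      by_cases h : μ (a+1) ≤ μ b
      · rw [if_pos h, card_insert_of_notMem (by simp), if_pos h]
      · rw [if_neg h, if_neg h]; omega
    have hK := Kuni hbij h1 hμ a (by omega) ha2 b hb1 (by omega)
    unfold mIn at hK
    rcases Nat.lt_or_ge (μ a) (μ (a+1)) with hlt | hge
    · have hfe : (Icc 1 b).filter
          (fun t => min (μ a) (μ (a+1)) < μ t ∧ μ t < max (μ a) (μ (a+1)))
          = (Icc 1 b).filter (fun t => μ a < μ t ∧ μ t < μ (a+1)) :=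
        filter_congr fun t _ => by omega
      rw [hfe] at hK
      have hs := Fc_split (μ := μ) b (μ a) (μ (a+1)) hlt
      have hEe := count_eq hbij b (a+1) (by omega) (by omega) ha2
      rw [hEe] at hs
      split_ifs at iha <;> split_ifs at hK <;> split_ifs at hs <;> split_ifs at hstep1 <;>
        split_ifs <;> omega
    · have hlt' : μ (a+1) < μ a := lt_of_le_of_ne hge (Ne.symm hne)
      have hfe : (Icc 1 b).filter
          (fun t => min (μ a) (μ (a+1)) < μ t ∧ μ t < max (μ a) (μ (a+1)))
          = (Icc 1 b).filter (fun t => μ (a+1) < μ t ∧ μ t < μ a) :=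
        filter_congr fun t _ => by omega
      rw [hfe] at hK
      have hs := Fc_split (μ := μ) b (μ (a+1)) (μ a) hlt'
      have hEe := count_eq hbij b a (by omega) (by omega) (by omega)
      rw [hEe] at hs
      split_ifs at iha <;> split_ifs at hK <;> split_ifs at hs <;> split_ifs at hstep1 <;>
        split_ifs <;> omega


/-- pointwise expansion of the adjacency indicator -/
lemma ptwise_core (hbij : Set.BijOn μ (Set.Icc 1 (2*n)) (Set.Icc 1 (2*n)))
    {j k : ℕ} (hj1 : 1 ≤ j) (hj2 : j ≤ 2*n) (hk1 : 1 ≤ k) (hk2 : k ≤ 2*n) :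
    ((if Ag μ j k then 1 else 0) + ((if k ≤ j then 1 else 0) + (if μ k ≤ μ j then 1 else 0)
      + ((if k = j then 1 else 0) + 1))) % 2 = 0 := by
  have hne : k ≠ j → μ k ≠ μ j := fun h h' => h (hinj hbij hk1 hk2 hj1 hj2 h')
  unfold Ag
  rcases lt_trichotomy k j with h | h | h
  · simp only [min_eq_right h.le, max_eq_left h.le]
    have := hne (by omega)
    split_ifs <;> omega
  · subst h
    simp only [min_self, max_self]
    split_ifs <;> omega
  · simp only [min_eq_left h.le, max_eq_right h.le]
    have := hne (by omega)
    split_ifs <;> omega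

lemma cardIccLe (x : ℕ) (hx : x ≤ 2*n) :
    ((Icc 1 (2*n)).filter fun k => k ≤ x).card = x := by
  have he : (Icc 1 (2*n)).filter (fun k => k ≤ x) = Icc 1 x := by
    ext k; simp only [mem_filter, mem_Icc]; omega
  rw [he, Nat.card_Icc]
  omega

lemma cardMuLe (hbij : Set.BijOn μ (Set.Icc 1 (2*n)) (Set.Icc 1 (2*n)))
    (y : ℕ) (hy : y ≤ 2*n) :
    ((Icc 1 (2*n)).filter fun k => μ k ≤ y).card = y := by
  rw [card_mu_filter hbij (fun v => v ≤ y)]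
  exact cardIccLe y hy

lemma cardSingle (c : ℕ) (hc1 : 1 ≤ c) (hc2 : c ≤ 2*n) (P : ℕ → Prop) [DecidablePred P] :
    ((Icc 1 (2*n)).filter fun k => P k ∧ k = c).card = if P c then 1 else 0 := by
  split_ifs with h
  · have he : (Icc 1 (2*n)).filter (fun k => P k ∧ k = c) = {c} := by
      ext k
      simp only [mem_filter, mem_Icc, mem_singleton]
      constructor
      · rintro ⟨_, _, rfl⟩; rfl
      · rintro rfl; exact ⟨⟨hc1, hc2⟩, h, rfl⟩
    rw [he, card_singleton]
  · rw [Finset.card_eq_zero, Finset.filter_eq_empty_iff]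
    rintro k _ ⟨hP, rfl⟩
    exact h hP

/-- degree parity -/
lemma degPar (hn : 0 < n) (hbij : Set.BijOn μ (Set.Icc 1 (2*n)) (Set.Icc 1 (2*n)))
    (h1 : μ 1 = 1) (hμ : IsMeandric n μ)
    (i : ℕ) (hi1 : 1 ≤ i) (hi2 : i ≤ 2*n) :
    ((Icc 1 (2*n)).filter fun k => Ag μ i k).card % 2 = 1 := by
  have key := sum_mod_two (Icc 1 (2*n))
    (fun k => (if Ag μ i k then 1 else 0) + ((if k ≤ i then 1 else 0)
      + (if μ k ≤ μ i then 1 else 0) + ((if k = i then 1 else 0) + 1)))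
    (fun k hk => by
      simp only [mem_Icc] at hk
      exact ptwise_core hbij hi1 hi2 hk.1 hk.2)
  rw [sum_add_distrib, sum_add_distrib, sum_add_distrib, sum_add_distrib,
    ← card_filter, ← card_filter, ← card_filter, ← card_filter, sum_const, smul_eq_mul,
    mul_one] at key
  have e1 := cardIccLe (n := n) i hi2
  have e2 := cardMuLe hbij (μ i) (hmem hbij hi1 hi2).2
  have e3 : ((Icc 1 (2*n)).filter fun k => k = i).card = 1 := by
    have he : (Icc 1 (2*n)).filter (fun k => k = i) = {i} := by
      ext k
      simp only [mem_filter, mem_Icc, mem_singleton]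
      constructor
      · rintro ⟨_, rfl⟩; rfl
      · rintro rfl; exact ⟨⟨hi1, hi2⟩, rfl⟩
    rw [he, card_singleton]
  have e4 : (Icc 1 (2*n)).card = 2*n := by rw [Nat.card_Icc]; omega
  have e5 := muParity hn hbij h1 hμ i hi1 hi2
  omega

/-- common-neighbour parity on the line part -/
lemma commPar (hn : 0 < n) (hbij : Set.BijOn μ (Set.Icc 1 (2*n)) (Set.Icc 1 (2*n)))
    (h1 : μ 1 = 1) (hμ : IsMeandric n μ)
    (i j : ℕ) (hi1 : 1 ≤ i) (hij : i < j) (hj2 : j ≤ 2*n) :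
    ((Icc 1 (2*n)).filter fun k => Ag μ i k ∧ Ag μ j k).card % 2
      = if μ j < μ i then 1 else 0 := by
  have hmi := hmem hbij hi1 (by omega : i ≤ 2*n)
  have hmj := hmem hbij (by omega : 1 ≤ j) hj2
  have hmuij : μ i ≠ μ j := fun h => by
    have := hinj hbij hi1 (by omega) (by omega : 1 ≤ j) hj2 h; omega
  -- expansion A: over the filter by (Ag i)
  have cA := sum_mod_two (Icc 1 (2*n))
    (fun k => (if Ag μ i k ∧ Ag μ j k then 1 else 0) + ((if Ag μ i k ∧ k ≤ j then 1 else 0)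
      + (if Ag μ i k ∧ μ k ≤ μ j then 1 else 0) + ((if Ag μ i k ∧ k = j then 1 else 0)
      + (if Ag μ i k then 1 else 0))))
    (fun k hk => by
      simp only [mem_Icc] at hk
      by_cases hA : Ag μ i k
      · simp only [hA, true_and, if_true]
        exact ptwise_core hbij (by omega : 1 ≤ j) hj2 hk.1 hk.2
      · simp only [hA, false_and, if_false, if_neg hA])
  rw [sum_add_distrib, sum_add_distrib, sum_add_distrib, sum_add_distrib,
    ← card_filter, ← card_filter, ← card_filter, ← card_filter, ← card_filter] at cA
  -- expansion B: over the filter by (k ≤ j)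
  have cB := sum_mod_two (Icc 1 (2*n))
    (fun k => (if Ag μ i k ∧ k ≤ j then 1 else 0) + ((if k ≤ i ∧ k ≤ j then 1 else 0)
      + (if μ k ≤ μ i ∧ k ≤ j then 1 else 0) + ((if k = i ∧ k ≤ j then 1 else 0)
      + (if k ≤ j then 1 else 0))))
    (fun k hk => by
      simp only [mem_Icc] at hk
      by_cases hg : k ≤ j
      · simp only [hg, and_true, if_true]
        exact ptwise_core hbij hi1 (by omega : i ≤ 2*n) hk.1 hk.2
      · simp only [hg, and_false, if_false, if_neg hg])
  rw [sum_add_distrib, sum_add_distrib, sum_add_distrib, sum_add_distrib,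
    ← card_filter, ← card_filter, ← card_filter, ← card_filter, ← card_filter] at cB
  -- expansion C: over the filter by (μ k ≤ μ j)
  have cC := sum_mod_two (Icc 1 (2*n))
    (fun k => (if Ag μ i k ∧ μ k ≤ μ j then 1 else 0) + ((if k ≤ i ∧ μ k ≤ μ j then 1 else 0)
      + (if μ k ≤ μ i ∧ μ k ≤ μ j then 1 else 0) + ((if k = i ∧ μ k ≤ μ j then 1 else 0)
      + (if μ k ≤ μ j then 1 else 0))))
    (fun k hk => by
      simp only [mem_Icc] at hk
      by_cases hg : μ k ≤ μ j
      · simp only [hg, and_true, if_true]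
        exact ptwise_core hbij hi1 (by omega : i ≤ 2*n) hk.1 hk.2
      · simp only [hg, and_false, if_false, if_neg hg])
  rw [sum_add_distrib, sum_add_distrib, sum_add_distrib, sum_add_distrib,
    ← card_filter, ← card_filter, ← card_filter, ← card_filter, ← card_filter] at cC
  -- evaluations
  have d1 := degPar hn hbij h1 hμ i hi1 (by omega)
  have eB1 : ((Icc 1 (2*n)).filter fun k => k ≤ i ∧ k ≤ j).card = i := by
    rw [filter_congr (fun k _ => show (k ≤ i ∧ k ≤ j) ↔ k ≤ i by omega)]
    exact cardIccLe i (by omega)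
  have eB2 : ((Icc 1 (2*n)).filter fun k => μ k ≤ μ i ∧ k ≤ j).card = Fc μ j (μ i) := by
    have he : (Icc 1 (2*n)).filter (fun k => μ k ≤ μ i ∧ k ≤ j)
        = (Icc 1 j).filter (fun t => μ t ≤ μ i) := by
      ext k
      simp only [mem_filter, mem_Icc]
      constructor
      · rintro ⟨_, h2, h3⟩; exact ⟨⟨by omega, h3⟩, h2⟩
      · rintro ⟨⟨h1k, h2k⟩, h3⟩; exact ⟨⟨h1k, by omega⟩, h3, h2k⟩
    rw [he]; rfl
  have eB3 : ((Icc 1 (2*n)).filter fun k => k = i ∧ k ≤ j).card = 1 := by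
    rw [filter_congr (fun k _ => (and_comm (a := k = i) (b := k ≤ j)))]
    rw [cardSingle i hi1 (by omega) (fun k => k ≤ j)]
    rw [if_pos (by omega : i ≤ j)]
  have eB4 := cardIccLe (n := n) j hj2
  have eC1 : ((Icc 1 (2*n)).filter fun k => k ≤ i ∧ μ k ≤ μ j).card = Fc μ i (μ j) := by
    have he : (Icc 1 (2*n)).filter (fun k => k ≤ i ∧ μ k ≤ μ j)
        = (Icc 1 i).filter (fun t => μ t ≤ μ j) := by
      ext k
      simp only [mem_filter, mem_Icc]
      constructor
      · rintro ⟨_, h2, h3⟩; exact ⟨⟨by omega, h2⟩, h3⟩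
      · rintro ⟨⟨h1k, h2k⟩, h3⟩; exact ⟨⟨h1k, by omega⟩, h2k, h3⟩
    rw [he]; rfl
  have eC2 : ((Icc 1 (2*n)).filter fun k => μ k ≤ μ i ∧ μ k ≤ μ j).card
      = min (μ i) (μ j) := by
    rw [filter_congr (fun k _ => show (μ k ≤ μ i ∧ μ k ≤ μ j) ↔ μ k ≤ min (μ i) (μ j) by
      omega)]
    exact cardMuLe hbij _ (by omega)
  have eC3 : ((Icc 1 (2*n)).filter fun k => k = i ∧ μ k ≤ μ j).card
      = if μ i ≤ μ j then 1 else 0 := by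
    rw [filter_congr (fun k _ => (and_comm (a := k = i) (b := μ k ≤ μ j)))]
    exact cardSingle i hi1 (by omega) (fun k => μ k ≤ μ j)
  have eC4 := cardMuLe hbij (μ j) hmj.2
  have eA1 : ((Icc 1 (2*n)).filter fun k => Ag μ i k ∧ k = j).card
      = if μ i < μ j then 1 else 0 := by
    rw [cardSingle j (by omega) hj2 (Ag μ i)]
    have : Ag μ i j ↔ μ i < μ j := by
      unfold Ag
      rw [min_eq_left (by omega : i ≤ j), max_eq_right (by omega : i ≤ j)]
      constructor
      · exact fun h => h.2
      · exact fun h => ⟨by omega, h⟩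
    split_ifs with h' h'' h'' <;> first | rfl | exact absurd (this.mp h') h'' |
      exact absurd (this.mpr h'') h'
  have hT := keyT hbij h1 hμ i hi1 j (by omega) hj2
  have p1 := muParity hn hbij h1 hμ i hi1 (by omega)
  have p2 := muParity hn hbij h1 hμ j (by omega) hj2
  rw [eA1] at cA
  rw [eB1, eB2, eB3, eB4] at cB
  rw [eC1, eC2, eC3, eC4] at cC
  split_ifs at cA cC hT ⊢ <;> omega


lemma rangeSplit : range (2*n+1) = insert 0 (Icc 1 (2*n)) := by
  ext k
  simp only [Finset.mem_range, Finset.mem_insert, Finset.mem_Icc]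
  omega

/-- full-graph degree count, vertex 0 -/
lemma mainDeg0 :
    ((range (2*n+1)).filter fun k => k ≠ 0 ∧ ((0:ℕ) = 0 ∨ k = 0 ∨
      μ (min 0 k) < μ (max 0 k))).card = 2*n := by
  rw [rangeSplit, filter_insert, if_neg (fun h => h.1 rfl)]
  have hc : ((Icc 1 (2*n)).filter fun k => k ≠ 0 ∧ ((0:ℕ) = 0 ∨ k = 0 ∨
      μ (min 0 k) < μ (max 0 k))) = Icc 1 (2*n) := by
    rw [filter_eq_self]
    intro k hk
    simp only [mem_Icc] at hk
    exact ⟨by omega, Or.inl rfl⟩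
  rw [hc, Nat.card_Icc]
  omega

/-- full-graph degree count, vertex `i ≥ 1` -/
lemma mainDeg (hn : 0 < n) (hbij : Set.BijOn μ (Set.Icc 1 (2*n)) (Set.Icc 1 (2*n)))
    (h1 : μ 1 = 1) (hμ : IsMeandric n μ) (i : ℕ) (hi1 : 1 ≤ i) (hi2 : i ≤ 2*n) :
    ((range (2*n+1)).filter fun k => k ≠ i ∧ (i = 0 ∨ k = 0 ∨
      μ (min i k) < μ (max i k))).card % 2 = 0 := by
  rw [rangeSplit, filter_insert, if_pos ⟨by omega, Or.inr (Or.inl rfl)⟩,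
    card_insert_of_notMem (by simp)]
  have hc : ((Icc 1 (2*n)).filter fun k => k ≠ i ∧ (i = 0 ∨ k = 0 ∨
      μ (min i k) < μ (max i k))) = (Icc 1 (2*n)).filter (fun k => Ag μ i k) :=
    filter_congr fun k hk => by
      simp only [mem_Icc] at hk
      unfold Ag
      omega
  rw [hc]
  have := degPar hn hbij h1 hμ i hi1 hi2
  omega

/-- full-graph common neighbour count, both `≥ 1` -/
lemma mainComm (hn : 0 < n) (hbij : Set.BijOn μ (Set.Icc 1 (2*n)) (Set.Icc 1 (2*n)))
    (h1 : μ 1 = 1) (hμ : IsMeandric n μ) (i j : ℕ) (hi1 : 1 ≤ i) (hi2 : i ≤ 2*n)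
    (hj1 : 1 ≤ j) (hj2 : j ≤ 2*n) (hij : i ≠ j) :
    ((range (2*n+1)).filter fun k =>
      (k ≠ i ∧ (i = 0 ∨ k = 0 ∨ μ (min i k) < μ (max i k))) ∧
      (k ≠ j ∧ (j = 0 ∨ k = 0 ∨ μ (min j k) < μ (max j k)))).card % 2
    = if μ (min i j) < μ (max i j) then 1 else 0 := by
  rw [rangeSplit, filter_insert,
    if_pos ⟨⟨by omega, Or.inr (Or.inl rfl)⟩, ⟨by omega, Or.inr (Or.inl rfl)⟩⟩,
    card_insert_of_notMem (by simp)]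
  have hmuij : μ i ≠ μ j := fun h => hij (hinj hbij hi1 hi2 hj1 hj2 h)
  have hc : ((Icc 1 (2*n)).filter fun k =>
      (k ≠ i ∧ (i = 0 ∨ k = 0 ∨ μ (min i k) < μ (max i k))) ∧
      (k ≠ j ∧ (j = 0 ∨ k = 0 ∨ μ (min j k) < μ (max j k))))
      = (Icc 1 (2*n)).filter (fun k => Ag μ i k ∧ Ag μ j k) :=
    filter_congr fun k hk => by
      simp only [mem_Icc] at hk
      unfold Ag
      omega
  rw [hc]
  rcases lt_or_gt_of_ne hij with h | h
  · have hcp := commPar hn hbij h1 hμ i j hi1 h hj2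
    have hbmin : μ (min i j) = μ i := by rw [min_eq_left (by omega : i ≤ j)]
    have hbmax : μ (max i j) = μ j := by rw [max_eq_right (by omega : i ≤ j)]
    split_ifs at hcp ⊢ <;> omega
  · have hcp := commPar hn hbij h1 hμ j i hj1 h hi2
    have hbmin : μ (min i j) = μ j := by rw [min_eq_right (by omega : j ≤ i)]
    have hbmax : μ (max i j) = μ i := by rw [max_eq_left (by omega : j ≤ i)]
    rw [filter_congr (fun k (_ : k ∈ Icc 1 (2*n)) =>
      and_comm (a := Ag μ i k) (b := Ag μ j k))]
    split_ifs at hcp ⊢ <;> omega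

/-- full-graph common neighbour count, first vertex 0 -/
lemma mainMix0l (hn : 0 < n) (hbij : Set.BijOn μ (Set.Icc 1 (2*n)) (Set.Icc 1 (2*n)))
    (h1 : μ 1 = 1) (hμ : IsMeandric n μ) (j : ℕ) (hj1 : 1 ≤ j) (hj2 : j ≤ 2*n) :
    ((range (2*n+1)).filter fun k =>
      (k ≠ 0 ∧ ((0:ℕ) = 0 ∨ k = 0 ∨ μ (min 0 k) < μ (max 0 k))) ∧
      (k ≠ j ∧ (j = 0 ∨ k = 0 ∨ μ (min j k) < μ (max j k)))).card % 2 = 1 := by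
  rw [rangeSplit, filter_insert, if_neg (fun h => h.1.1 rfl)]
  have hc : ((Icc 1 (2*n)).filter fun k =>
      (k ≠ 0 ∧ ((0:ℕ) = 0 ∨ k = 0 ∨ μ (min 0 k) < μ (max 0 k))) ∧
      (k ≠ j ∧ (j = 0 ∨ k = 0 ∨ μ (min j k) < μ (max j k))))
      = (Icc 1 (2*n)).filter (Ag μ j) :=
    filter_congr fun k hk => by
      simp only [mem_Icc] at hk
      unfold Ag
      omega
  rw [hc]
  exact degPar hn hbij h1 hμ j hj1 hj2

/-- full-graph common neighbour count, second vertex 0 -/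
lemma mainMix0r (hn : 0 < n) (hbij : Set.BijOn μ (Set.Icc 1 (2*n)) (Set.Icc 1 (2*n)))
    (h1 : μ 1 = 1) (hμ : IsMeandric n μ) (i : ℕ) (hi1 : 1 ≤ i) (hi2 : i ≤ 2*n) :
    ((range (2*n+1)).filter fun k =>
      (k ≠ i ∧ (i = 0 ∨ k = 0 ∨ μ (min i k) < μ (max i k))) ∧
      (k ≠ 0 ∧ ((0:ℕ) = 0 ∨ k = 0 ∨ μ (min 0 k) < μ (max 0 k)))).card % 2 = 1 := by
  rw [rangeSplit, filter_insert, if_neg (fun h => h.2.1 rfl)]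
  have hc : ((Icc 1 (2*n)).filter fun k =>
      (k ≠ i ∧ (i = 0 ∨ k = 0 ∨ μ (min i k) < μ (max i k))) ∧
      (k ≠ 0 ∧ ((0:ℕ) = 0 ∨ k = 0 ∨ μ (min 0 k) < μ (max 0 k))))
      = (Icc 1 (2*n)).filter (Ag μ i) :=
    filter_congr fun k hk => by
      simp only [mem_Icc] at hk
      unfold Ag
      omega
  rw [hc]
  exact degPar hn hbij h1 hμ i hi1 hi2


lemma hnc (S : Set (Fin (2*n+1))) (q : ℕ → Prop) [inst : DecidablePred q]
    (hSq : ∀ x : Fin (2*n+1), x ∈ S ↔ q x.val) :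
    S.ncard = ((range (2*n+1)).filter q).card := by
  have hS : S = ↑(Finset.univ.filter fun x : Fin (2*n+1) => q x.val) := by
    ext x
    simp only [Finset.coe_filter, Finset.mem_univ, true_and, Set.mem_setOf_eq, hSq x]
  rw [hS, Set.ncard_coe_finset, card_filter, card_filter]
  exact Fin.sum_univ_eq_sum_range (fun k => if q k then 1 else 0) (2*n+1)

end Main
end MeandricAux

/-- In a meandric graph: every vertex has an even number of neighbors;
nonadjacent distinct vertices have an even number of common neighbors;
adjacent vertices have an odd number of common neighbors. -/
theorem meandric_graph_neighbor_parities (n : ℕ) (μ : ℕ → ℕ) (hn : 0 < n)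
    (hbij : Set.BijOn μ (Set.Icc 1 (2 * n)) (Set.Icc 1 (2 * n)))
    (h1 : μ 1 = 1) (hμ : IsMeandric n μ) :
    (∀ v, Even ((meandricGraph n μ).neighborSet v).ncard) ∧
    (∀ v u, u ≠ v → u ∉ (meandricGraph n μ).neighborSet v →
      Even (((meandricGraph n μ).neighborSet v) ∩
        ((meandricGraph n μ).neighborSet u)).ncard) ∧
    (∀ v w, w ∈ (meandricGraph n μ).neighborSet v →
      Odd (((meandricGraph n μ).neighborSet v) ∩
        ((meandricGraph n μ).neighborSet w)).ncard) := by
  have hAdj : ∀ v u : Fin (2*n+1), (meandricGraph n μ).Adj v u ↔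
      (u.val ≠ v.val ∧ (v.val = 0 ∨ u.val = 0 ∨
        μ (min v.val u.val) < μ (max v.val u.val))) := by
    intro v u
    have h0 : (meandricGraph n μ).Adj v u ↔ (v ≠ u ∧ (v.val = 0 ∨ u.val = 0 ∨
        μ (min v.val u.val) < μ (max v.val u.val))) := Iff.rfl
    rw [h0]
    constructor
    · rintro ⟨ha, hb⟩
      exact ⟨fun h => ha (Fin.ext h.symm), hb⟩
    · rintro ⟨ha, hb⟩
      exact ⟨fun h => ha (congrArg Fin.val h.symm), hb⟩
  refine ⟨?_, ?_, ?_⟩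
  · -- all degrees even
    intro v
    have hvlt := v.isLt
    have e := MeandricAux.hnc (n := n) ((meandricGraph n μ).neighborSet v)
      (fun k => k ≠ v.val ∧ (v.val = 0 ∨ k = 0 ∨ μ (min v.val k) < μ (max v.val k)))
      (fun x => by rw [SimpleGraph.mem_neighborSet, hAdj v x])
    rw [e, Nat.even_iff]
    rcases Nat.eq_zero_or_pos v.val with hv | hv
    · rw [hv]
      rw [MeandricAux.mainDeg0 (n := n) (μ := μ)]
      omega
    · exact MeandricAux.mainDeg hn hbij h1 hμ v.val hv (by omega)
  · -- nonadjacent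
    intro v u hne hnm
    have hvlt := v.isLt
    have hult := u.isLt
    have hvu : v ≠ u := Ne.symm hne
    by_cases hv : v.val = 0
    · exact absurd ((SimpleGraph.mem_neighborSet _ _ _).mpr
        ((hAdj v u).mpr ⟨fun h => hne (Fin.ext h), Or.inl hv⟩)) hnm
    by_cases hu : u.val = 0
    · exact absurd ((SimpleGraph.mem_neighborSet _ _ _).mpr
        ((hAdj v u).mpr ⟨fun h => hne (Fin.ext h), Or.inr (Or.inl hu)⟩)) hnm
    have hnadj : ¬ (μ (min v.val u.val) < μ (max v.val u.val)) := fun hlt =>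
      hnm ((SimpleGraph.mem_neighborSet _ _ _).mpr
        ((hAdj v u).mpr ⟨fun h => hne (Fin.ext h), Or.inr (Or.inr hlt)⟩))
    have e := MeandricAux.hnc (n := n)
      ((meandricGraph n μ).neighborSet v ∩ (meandricGraph n μ).neighborSet u)
      (fun k => (k ≠ v.val ∧ (v.val = 0 ∨ k = 0 ∨ μ (min v.val k) < μ (max v.val k))) ∧
        (k ≠ u.val ∧ (u.val = 0 ∨ k = 0 ∨ μ (min u.val k) < μ (max u.val k))))
      (fun x => by
        simp only [Set.mem_inter_iff, SimpleGraph.mem_neighborSet, hAdj v x, hAdj u x])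
    rw [e, Nat.even_iff]
    have hcm := MeandricAux.mainComm hn hbij h1 hμ v.val u.val (by omega) (by omega)
      (by omega) (by omega) (fun h => hne (Fin.ext h.symm))
    rw [if_neg hnadj] at hcm
    exact hcm
  · -- adjacent
    intro v w hm
    have hvlt := v.isLt
    have hwlt := w.isLt
    have hadj : (meandricGraph n μ).Adj v w := (SimpleGraph.mem_neighborSet _ _ _).mp hm
    have hadj' := (hAdj v w).mp hadj
    have e := MeandricAux.hnc (n := n)
      ((meandricGraph n μ).neighborSet v ∩ (meandricGraph n μ).neighborSet w)
      (fun k => (k ≠ v.val ∧ (v.val = 0 ∨ k = 0 ∨ μ (min v.val k) < μ (max v.val k))) ∧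
        (k ≠ w.val ∧ (w.val = 0 ∨ k = 0 ∨ μ (min w.val k) < μ (max w.val k))))
      (fun x => by
        simp only [Set.mem_inter_iff, SimpleGraph.mem_neighborSet, hAdj v x, hAdj w x])
    rw [e, Nat.odd_iff]
    by_cases hv : v.val = 0
    · -- w.val ≥ 1
      have hw1 : 1 ≤ w.val := by
        have hne' := hadj'.1
        omega
      have := MeandricAux.mainMix0l hn hbij h1 hμ w.val hw1 (by omega)
      -- rewrite v.val to 0 in the goal
      rw [show v.val = 0 from hv]
      exact this
    by_cases hw : w.val = 0
    · have hv1 : 1 ≤ v.val := by omega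
      have := MeandricAux.mainMix0r hn hbij h1 hμ v.val hv1 (by omega)
      rw [show w.val = 0 from hw]
      exact this
    · have hlt : μ (min v.val w.val) < μ (max v.val w.val) := by
        rcases hadj'.2 with h | h | h
        · exact absurd h hv
        · exact absurd h hw
        · exact h
      have hcm := MeandricAux.mainComm hn hbij h1 hμ v.val w.val (by omega) (by omega)
        (by omega) (by omega) (by omega)
      rw [if_pos hlt] at hcm
      exact hcm
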